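/- Suppose there exists a measurable function m : Ω → ℝ such that for all a.e. strongly measurable f, g : Ω → A one has ‖f(ω)‖·‖g(ω)‖ ≤ m(ω)·‖f(ω)g(ω)‖ for μ-almost every ω. Then L⁰(Ω, A) is isometrically isomorphic to L⁰(Ω, ℂ): for every a.e. strongly measurable f : Ω → A there exists a measurable a_f : Ω → ℂ, unique up to a.e. equality, with f(ω) = a_f(ω)·1 for a.e. ω, and moreover ‖f(ω)‖ = |a_f(ω)| a.e. (Theorem 3.2, specialized to E = L⁰(Ω) and the constant measurable bundle 𝒳(ω) = A.) -/

import Mathlib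

open MeasureTheory Filter

/-- Auxiliary Gelfand–Mazur-type lemma: if for every `x` and every sequence `z`
there is a constant `C` with `‖x‖ * ‖z n‖ ≤ C * ‖x * z n‖`, then every element of
the complex Banach algebra `A` is a scalar multiple of `1`. -/
lemma aux_scalar {A : Type*} [NormedRing A] [NormedAlgebra ℂ A] [CompleteSpace A]
    [NormOneClass A]
    (H : ∀ (x : A) (z : ℕ → A), ∃ C : ℝ, ∀ n, ‖x‖ * ‖z n‖ ≤ C * ‖x * z n‖)
    (a : A) : ∃ l : ℂ, a = l • 1 := by
  haveI : Nontrivial A := nontrivial_of_ne 1 0 (by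
    intro h
    have h1 : ‖(1 : A)‖ = 1 := norm_one
    rw [h, norm_zero] at h1
    norm_num at h1)
  obtain ⟨l, hl⟩ : (frontier (spectrum ℂ a)).Nonempty := by
    by_contra h
    rw [Set.not_nonempty_iff_eq_empty] at h
    have hclopen : IsClopen (spectrum ℂ a) := isClopen_iff_frontier_eq_empty.mpr h
    rcases isClopen_iff.mp hclopen with h1 | h1
    · exact (spectrum.nonempty a).ne_empty h1
    · exact (spectrum.isCompact a).ne_univ h1
  have hls : l ∈ spectrum ℂ a := by
    have := frontier_subset_closure hl
    rwa [(spectrum.isClosed a).closure_eq] at this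
  have hlc : l ∈ closure (spectrum ℂ a)ᶜ := by
    rw [frontier_eq_closure_inter_closure] at hl
    exact hl.2
  obtain ⟨u, hu, hlim⟩ := mem_closure_iff_seq_limit.mp hlc
  set x := algebraMap ℂ A l - a with hxdef
  have hxnu : ¬IsUnit x := spectrum.mem_iff.mp hls
  have hun : ∀ n, IsUnit (algebraMap ℂ A (u n) - a) := fun n =>
    spectrum.notMem_iff.mp (hu n)
  set z : ℕ → A := fun n => Ring.inverse (algebraMap ℂ A (u n) - a) with hzdef
  have hmul : ∀ n, (algebraMap ℂ A (u n) - a) * z n = 1 := fun n =>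
    Ring.mul_inverse_cancel _ (hun n)
  have hx_eq : ∀ n, x = (algebraMap ℂ A (u n) - a) + (l - u n) • (1 : A) := by
    intro n
    rw [← Algebra.algebraMap_eq_smul_one, hxdef, map_sub]
    abel
  have hne : ∀ n, l - u n ≠ 0 := by
    intro n h
    exact hu n (by rwa [sub_eq_zero.mp h] at hls)
  have hz_lb : ∀ n, 1 ≤ ‖l - u n‖ * ‖z n‖ := by
    intro n
    by_contra h
    push_neg at h
    have h1 : ‖-((l - u n) • z n)‖ < 1 := by rwa [norm_neg, norm_smul]
    have h2 : IsUnit (1 + (l - u n) • z n) := by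
      have := (Units.oneSub (-((l - u n) • z n)) h1).isUnit
      simpa [sub_neg_eq_add] using this
    have hxu : x = (algebraMap ℂ A (u n) - a) * (1 + (l - u n) • z n) := by
      rw [mul_add, mul_one, mul_smul_comm, hmul n, hx_eq n]
    exact hxnu (hxu ▸ (hun n).mul h2)
  have hzpos : ∀ n, 0 < ‖z n‖ := by
    intro n
    rcases (norm_nonneg (z n)).lt_or_eq with h | h
    · exact h
    · exfalso; have h2 := hz_lb n; rw [← h, mul_zero] at h2; norm_num at h2
  obtain ⟨C, hC⟩ := H x z
  set C' := max C 0 with hC'def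
  have hC'nn : 0 ≤ C' := le_max_right C 0
  have hxz : ∀ n, ‖x * z n‖ ≤ ‖l - u n‖ * ‖z n‖ + 1 := by
    intro n
    have : x * z n = (l - u n) • z n + 1 := by
      rw [hx_eq n, add_mul, hmul n, smul_mul_assoc, one_mul, add_comm]
    calc ‖x * z n‖ = ‖(l - u n) • z n + 1‖ := by rw [this]
      _ ≤ ‖(l - u n) • z n‖ + ‖(1 : A)‖ := norm_add_le _ _
      _ = ‖l - u n‖ * ‖z n‖ + 1 := by rw [norm_smul, norm_one]
  have hfin : ∀ n, ‖x‖ ≤ 2 * C' * ‖l - u n‖ := by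
    intro n
    have h1 : ‖x‖ * ‖z n‖ ≤ C' * (‖l - u n‖ * ‖z n‖ + 1) := by
      calc ‖x‖ * ‖z n‖ ≤ C * ‖x * z n‖ := hC n
        _ ≤ C' * ‖x * z n‖ :=
          mul_le_mul_of_nonneg_right (le_max_left C 0) (norm_nonneg _)
        _ ≤ C' * (‖l - u n‖ * ‖z n‖ + 1) :=
          mul_le_mul_of_nonneg_left (hxz n) hC'nn
    have h2 := hz_lb n
    have h3 := hzpos n
    nlinarith [norm_nonneg x, norm_nonneg (l - u n)]
  have hlim0 : Tendsto (fun n => 2 * C' * ‖l - u n‖) atTop (nhds 0) := by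
    have h1 : Tendsto (fun n => l - u n) atTop (nhds (l - l)) :=
      tendsto_const_nhds.sub hlim
    rw [sub_self] at h1
    have h2 : Tendsto (fun n => ‖l - u n‖) atTop (nhds 0) := by
      simpa using h1.norm
    simpa using h2.const_mul (2 * C')
  have hx0 : x = 0 := by
    have h0 : ‖x‖ ≤ 0 := ge_of_tendsto' hlim0 hfin
    exact norm_eq_zero.mp (le_antisymm h0 (norm_nonneg x))
  refine ⟨l, ?_⟩
  have : algebraMap ℂ A l = a := by
    have := sub_eq_zero.mp hx0
    exact this
  rw [← this, Algebra.algebraMap_eq_smul_one]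

/-- Scalars are determined: `c • 1 = d • 1 → c = d` in a `NormOneClass` algebra. -/
lemma aux_smul_one_inj {A : Type*} [NormedRing A] [NormedAlgebra ℂ A] [NormOneClass A]
    {c d : ℂ} (h : c • (1 : A) = d • 1) : c = d := by
  have h1 : ‖(c - d) • (1 : A)‖ = 0 := by
    rw [sub_smul, h, sub_self, norm_zero]
  rw [norm_smul, norm_one, mul_one, norm_eq_zero, sub_eq_zero] at h1
  exact h1

theorem stmt12 {Ω : Type*} [MeasurableSpace Ω] (μ : Measure Ω) [IsFiniteMeasure μ]
    (hμ : 0 < μ Set.univ)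
    {A : Type*} [NormedRing A] [NormedAlgebra ℂ A] [CompleteSpace A] [NormOneClass A]
    (m : Ω → ℝ) (hm : Measurable m)
    (hbound : ∀ f g : Ω → A, AEStronglyMeasurable f μ → AEStronglyMeasurable g μ →
      ∀ᵐ ω ∂μ, ‖f ω‖ * ‖g ω‖ ≤ m ω * ‖f ω * g ω‖) :
    ∀ f : Ω → A, AEStronglyMeasurable f μ →
      ∃ a : Ω → ℂ, Measurable a ∧
        (∀ᵐ ω ∂μ, f ω = a ω • (1 : A)) ∧
        (∀ᵐ ω ∂μ, ‖f ω‖ = ‖a ω‖) ∧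
        (∀ b : Ω → ℂ, Measurable b → (∀ᵐ ω ∂μ, f ω = b ω • (1 : A)) → a =ᵐ[μ] b) := by
  have hμne : μ ≠ 0 := by
    intro h
    rw [h] at hμ
    simp at hμ
  have hNB : (ae μ).NeBot := ae_neBot.mpr hμne
  have H : ∀ (x : A) (z : ℕ → A), ∃ C : ℝ, ∀ n, ‖x‖ * ‖z n‖ ≤ C * ‖x * z n‖ := by
    intro x z
    have h : ∀ᵐ ω ∂μ, ∀ n, ‖x‖ * ‖z n‖ ≤ m ω * ‖x * z n‖ :=
      ae_all_iff.mpr fun n =>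
        hbound (fun _ => x) (fun _ => z n) aestronglyMeasurable_const
          aestronglyMeasurable_const
    obtain ⟨ω, hω⟩ := h.exists
    exact ⟨m ω, hω⟩
  have key := aux_scalar H
  choose Φ hΦ using key
  have hΦiso : Isometry Φ := by
    refine Isometry.of_dist_eq fun p q => ?_
    have h1 : p - q = (Φ p - Φ q) • (1 : A) := by
      rw [sub_smul, ← hΦ p, ← hΦ q]
    rw [dist_eq_norm, dist_eq_norm, h1, norm_smul, norm_one, mul_one]
  intro f hf
  obtain ⟨g, hg, hfg⟩ := hf
  refine ⟨Φ ∘ g, (hΦiso.continuous.comp_stronglyMeasurable hg).measurable, ?_, ?_, ?_⟩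
  · exact hfg.mono fun ω h => by rw [h]; exact hΦ (g ω)
  · refine hfg.mono fun ω h => ?_
    rw [h, hΦ (g ω), norm_smul, norm_one, mul_one,
      Function.comp_apply]
  · intro b hb hab
    have h1 : ∀ᵐ ω ∂μ, f ω = Φ (g ω) • (1 : A) :=
      hfg.mono fun ω h => by rw [h]; exact hΦ (g ω)
    filter_upwards [h1, hab] with ω hω1 hω2
    exact aux_smul_one_inj (hω1 ▸ hω2)
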